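/- Let h^{New}_T(X|╬Į,Šĩ) denote the Newhouse local entropy of an ergodic measure ╬Į at scale Šĩ for a continuous map T on a compact metric space X. Then for every positive integer k and every T-ergodic measure ╬Į, h^{New}_T(X|╬Į,Šĩ) Ōēż (1/k)·h^{New}_{T^k}(X|╬Į,Šĩ). -/

import Mathlib

open MeasureTheory Filter

variable {X : Type*} [MetricSpace X]

/-- The Bowen ball `B(x, n, ε)`. -/
def bowenBall (T : X → X) (x : X) (n : ℕ) (ε : ℝ) : Set X :=
  {y | ∀ k < n, dist (T^[k] x) (T^[k] y) < ε}

/-- `E` is `(n,δ)`-separated for `T`. -/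
def IsSeparated (T : X → X) (n : ℕ) (δ : ℝ) (E : Finset X) : Prop :=
  ∀ x ∈ E, ∀ y ∈ E, x ≠ y → ∃ k < n, δ ≤ dist (T^[k] x) (T^[k] y)

/-- `H(n,δ | x,F,ε)`: log of the maximal cardinality of an `(n,δ)`-separated subset of
`F ∩ B(x,n,ε)`. -/
noncomputable def Hloc (T : X → X) (n : ℕ) (δ : ℝ) (x : X) (F : Set X) (ε : ℝ) : ℝ :=
  Real.log (sSup {m : ℝ | ∃ E : Finset X,
    ↑E ⊆ F ∩ bowenBall T x n ε ∧ IsSeparated T n δ E ∧ m = E.card})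

/-- `H(n,δ | F,ε) = sup_{x ∈ F} H(n,δ | x,F,ε)`. -/
noncomputable def HlocF (T : X → X) (n : ℕ) (δ : ℝ) (F : Set X) (ε : ℝ) : ℝ :=
  ⨆ x : F, Hloc T n δ x F ε

/-- `h(δ | F,ε) = limsup_n H(n,δ|F,ε)/n`. -/
noncomputable def hδF (T : X → X) (δ : ℝ) (F : Set X) (ε : ℝ) : ℝ :=
  limsup (fun n : ℕ => HlocF T n δ F ε / n) atTop

/-- `h(X | F,ε) = lim_{δ→0} h(δ|F,ε)` (a supremum over `δ > 0` by monotonicity). -/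
noncomputable def hXF (T : X → X) (F : Set X) (ε : ℝ) : ℝ :=
  ⨆ δ : {δ : ℝ // 0 < δ}, hδF T δ F ε

/-- Newhouse local entropy `h^{New}(X|ν,ε) = lim_{σ→1} inf_{ν(F) > σ} h(X|F,ε)`
(a supremum over `σ < 1` by monotonicity). -/
noncomputable def hNew [MeasurableSpace X] (T : X → X) (ν : Measure X) (ε : ℝ) : ℝ :=
  ⨆ σ : {σ : ℝ // σ < 1},
    sInf {h : ℝ | ∃ F : Set X, MeasurableSet F ∧ (σ : ℝ) < (ν F).toReal ∧ h = hXF T F ε}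

namespace NHAux

lemma log_le_log' {x y : ℝ} (hx : 0 ≤ x) (hxy : x ≤ y) (hy : 1 ≤ y) :
    Real.log x ≤ Real.log y := by
  rcases le_or_gt x 1 with h | h
  · exact (Real.log_nonpos hx h).trans (Real.log_nonneg hy)
  · exact Real.log_le_log (lt_trans one_pos h) hxy

lemma isSeparated_empty (T : X → X) (n : ℕ) (δ : ℝ) : IsSeparated T n δ (∅ : Finset X) := by
  intro a ha; simp at ha

lemma isSeparated_singleton (T : X → X) (n : ℕ) (δ : ℝ) (x : X) :
    IsSeparated T n δ ({x} : Finset X) := by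
  intro a ha b hb hab
  simp only [Finset.mem_singleton] at ha hb
  exact absurd (ha.trans hb.symm) hab

lemma isSeparated_subset {T : X → X} {n : ℕ} {δ : ℝ} {E E' : Finset X}
    (h : IsSeparated T n δ E) (hsub : E' ⊆ E) : IsSeparated T n δ E' :=
  fun a ha b hb hab => h a (hsub ha) b (hsub hb) hab

/-- Uniform bound on cardinalities of `(n,δ)`-separated sets. -/
lemma sep_bound [CompactSpace X] [Nonempty X] (S : X → X) {δ : ℝ} (hδ : 0 < δ) :
    ∃ Q : ℕ, 1 ≤ Q ∧ ∀ (n : ℕ) (E : Finset X), IsSeparated S n δ E → E.card ≤ Q ^ n := by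
  obtain ⟨t, -, htf, htc⟩ :=
    finite_cover_balls_of_compact (isCompact_univ (X := X)) (half_pos hδ)
  choose c hc1 hc2 using fun y : X => Set.mem_iUnion₂.1 (htc (Set.mem_univ y))
  set tF : Finset X := htf.toFinset with htF
  have hmem : ∀ y : X, c y ∈ tF := fun y => htf.mem_toFinset.2 (hc1 y)
  refine ⟨tF.card, ?_, ?_⟩
  · have y0 := Classical.arbitrary X
    exact Finset.card_pos.2 ⟨c y0, hmem y0⟩
  · intro n E hsep
    classical
    have hinj : Set.InjOn (fun y : X => fun j : Fin n => (⟨c (S^[(j : ℕ)] y), hmem _⟩ : ↥tF))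
        (E : Set X) := by
      intro a ha b hb hfab
      by_contra hne
      obtain ⟨j, hj, hd⟩ := hsep a ha b hb hne
      have hcc : c (S^[j] a) = c (S^[j] b) := by
        have := congrFun hfab ⟨j, hj⟩
        simpa using this
      have d1 : dist (S^[j] a) (c (S^[j] a)) < δ / 2 := Metric.mem_ball.1 (hc2 (S^[j] a))
      have d2 : dist (S^[j] b) (c (S^[j] b)) < δ / 2 := Metric.mem_ball.1 (hc2 (S^[j] b))
      rw [hcc] at d1
      have : dist (S^[j] a) (S^[j] b) ≤
          dist (S^[j] a) (c (S^[j] b)) + dist (c (S^[j] b)) (S^[j] b) := dist_triangle _ _ _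
      rw [dist_comm (c (S^[j] b))] at this
      linarith
    have := Finset.card_le_card_of_injOn _ (fun a _ => Finset.mem_univ _) hinj
    calc E.card ≤ (Finset.univ : Finset (Fin n → ↥tF)).card := this
      _ = tF.card ^ n := by
          rw [Finset.card_univ, Fintype.card_fun, Fintype.card_coe, Fintype.card_fin]

def MSet (T : X → X) (n : ℕ) (δ : ℝ) (x : X) (F : Set X) (ε : ℝ) : Set ℝ :=
  {m : ℝ | ∃ E : Finset X,
    ↑E ⊆ F ∩ bowenBall T x n ε ∧ IsSeparated T n δ E ∧ m = E.card}

lemma Hloc_eq (T : X → X) (n : ℕ) (δ : ℝ) (x : X) (F : Set X) (ε : ℝ) :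
    Hloc T n δ x F ε = Real.log (sSup (MSet T n δ x F ε)) := rfl

lemma zero_mem_MSet (T : X → X) (n : ℕ) (δ : ℝ) (x : X) (F : Set X) (ε : ℝ) :
    (0 : ℝ) ∈ MSet T n δ x F ε :=
  ⟨∅, by simp, isSeparated_empty T n δ, by simp⟩

lemma one_mem_MSet (T : X → X) (n : ℕ) (δ : ℝ) {x : X} {F : Set X} {ε : ℝ}
    (hx : x ∈ F) (hε : 0 < ε) : (1 : ℝ) ∈ MSet T n δ x F ε := by
  refine ⟨{x}, ?_, isSeparated_singleton T n δ x, by simp⟩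
  intro y hy
  simp only [Finset.coe_singleton, Set.mem_singleton_iff] at hy
  subst hy
  exact ⟨hx, fun j _ => by simpa using hε⟩

lemma MSet_bddAbove {Q : ℕ} {T : X → X} {n : ℕ} {δ : ℝ} {x : X} {F : Set X} {ε : ℝ}
    (hQ : ∀ (E : Finset X), IsSeparated T n δ E → E.card ≤ Q ^ n) :
    BddAbove (MSet T n δ x F ε) := by
  refine ⟨(Q : ℝ) ^ n, ?_⟩
  rintro m ⟨E, -, hsep, rfl⟩
  exact_mod_cast hQ E hsep

lemma sSup_MSet_nonneg (T : X → X) (n : ℕ) (δ : ℝ) (x : X) (F : Set X) (ε : ℝ) :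
    0 ≤ sSup (MSet T n δ x F ε) :=
  Real.sSup_nonneg' ⟨0, zero_mem_MSet T n δ x F ε, le_rfl⟩

lemma one_le_sSup_MSet {Q : ℕ} {T : X → X} {n : ℕ} {δ : ℝ} {x : X} {F : Set X} {ε : ℝ}
    (hQ : ∀ (E : Finset X), IsSeparated T n δ E → E.card ≤ Q ^ n)
    (hx : x ∈ F) (hε : 0 < ε) : 1 ≤ sSup (MSet T n δ x F ε) :=
  le_csSup (MSet_bddAbove hQ) (one_mem_MSet T n δ hx hε)

lemma Hloc_nonneg {Q : ℕ} {T : X → X} {n : ℕ} {δ : ℝ} {x : X} {F : Set X} {ε : ℝ}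
    (hQ : ∀ (E : Finset X), IsSeparated T n δ E → E.card ≤ Q ^ n)
    (hx : x ∈ F) (hε : 0 < ε) : 0 ≤ Hloc T n δ x F ε :=
  Real.log_nonneg (one_le_sSup_MSet hQ hx hε)

lemma Hloc_le {Q : ℕ} {T : X → X} {n : ℕ} {δ : ℝ} {x : X} {F : Set X} {ε : ℝ}
    (hQ1 : 1 ≤ Q) (hQ : ∀ (E : Finset X), IsSeparated T n δ E → E.card ≤ Q ^ n) :
    Hloc T n δ x F ε ≤ n * Real.log Q := by
  rw [Hloc_eq, ← Real.log_pow]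
  refine log_le_log' (sSup_MSet_nonneg T n δ x F ε) ?_ (one_le_pow₀ (by exact_mod_cast hQ1))
  refine Real.sSup_le ?_ (by positivity)
  rintro m ⟨E, -, hsep, rfl⟩
  exact_mod_cast hQ E hsep


lemma HlocF_nonneg {Q : ℕ} {T : X → X} {n : ℕ} {δ : ℝ} {F : Set X} {ε : ℝ}
    (hQ : ∀ (E : Finset X), IsSeparated T n δ E → E.card ≤ Q ^ n) (hε : 0 < ε) :
    0 ≤ HlocF T n δ F ε :=
  Real.iSup_nonneg fun x => Hloc_nonneg hQ x.2 hε

lemma HlocF_le {Q : ℕ} {T : X → X} {n : ℕ} {δ : ℝ} {F : Set X} {ε : ℝ}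
    (hQ1 : 1 ≤ Q) (hQ : ∀ (E : Finset X), IsSeparated T n δ E → E.card ≤ Q ^ n) :
    HlocF T n δ F ε ≤ n * Real.log Q := by
  refine Real.iSup_le (fun x => Hloc_le hQ1 hQ) ?_
  have : (0:ℝ) ≤ Real.log Q := Real.log_nonneg (by exact_mod_cast hQ1)
  positivity

lemma bddAbove_Hloc {Q : ℕ} {T : X → X} {n : ℕ} {δ : ℝ} {F : Set X} {ε : ℝ}
    (hQ1 : 1 ≤ Q) (hQ : ∀ (E : Finset X), IsSeparated T n δ E → E.card ≤ Q ^ n) :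
    BddAbove (Set.range fun x : F => Hloc T n δ x F ε) := by
  refine ⟨n * Real.log Q, ?_⟩
  rintro m ⟨x, rfl⟩
  exact Hloc_le hQ1 hQ

lemma Hloc_le_HlocF {Q : ℕ} {T : X → X} {n : ℕ} {δ : ℝ} {x : X} {F : Set X} {ε : ℝ}
    (hQ1 : 1 ≤ Q) (hQ : ∀ (E : Finset X), IsSeparated T n δ E → E.card ≤ Q ^ n)
    (hx : x ∈ F) : Hloc T n δ x F ε ≤ HlocF T n δ F ε :=
  le_ciSup (bddAbove_Hloc hQ1 hQ) (⟨x, hx⟩ : F)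

/-- Uniform continuity of the first `k` iterates. -/
lemma unif_iterates [CompactSpace X] {T : X → X} (hT : Continuous T) (k : ℕ) {δ : ℝ}
    (hδ : 0 < δ) :
    ∃ δ' : ℝ, 0 < δ' ∧ ∀ a b : X, dist a b < δ' → ∀ r < k, dist (T^[r] a) (T^[r] b) < δ := by
  have hg : Continuous (fun x : X => fun r : Fin k => T^[(r : ℕ)] x) :=
    continuous_pi fun r => hT.iterate r
  have hu : UniformContinuous (fun x : X => fun r : Fin k => T^[(r : ℕ)] x) :=
    CompactSpace.uniformContinuous_of_continuous hg
  obtain ⟨δ', hδ', H⟩ := Metric.uniformContinuous_iff.1 hu δ hδ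
  refine ⟨δ', hδ', fun a b hab r hr => ?_⟩
  calc dist (T^[r] a) (T^[r] b)
      ≤ dist (fun i : Fin k => T^[(i : ℕ)] a) (fun i : Fin k => T^[(i : ℕ)] b) :=
        dist_le_pi_dist (fun i : Fin k => T^[(i : ℕ)] a) (fun i : Fin k => T^[(i : ℕ)] b) ⟨r, hr⟩
    _ < δ := H hab

/-- Key comparison: `H_T(n,δ) ≤ H_{T^k}(⌈n/k⌉,δ')`. -/
lemma key1 [CompactSpace X] [Nonempty X] {T : X → X} {k : ℕ} (hk : 0 < k)
    {δ δ' : ℝ} (hδ' : 0 < δ')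
    (hδδ' : ∀ a b : X, dist a b < δ' → ∀ r < k, dist (T^[r] a) (T^[r] b) < δ)
    (n : ℕ) {x : X} {F : Set X} {ε : ℝ} (hx : x ∈ F) (hε : 0 < ε) :
    Hloc T n δ x F ε ≤ Hloc (T^[k]) ((n + k - 1) / k) δ' x F ε := by
  obtain ⟨Q, hQ1, hQ⟩ := sep_bound (T^[k]) hδ'
  set m := (n + k - 1) / k with hm
  rw [Hloc_eq, Hloc_eq]
  refine log_le_log' (sSup_MSet_nonneg _ _ _ _ _ _) ?_ (one_le_sSup_MSet (hQ m) hx hε)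
  refine csSup_le_csSup (MSet_bddAbove (hQ m)) ⟨0, zero_mem_MSet _ _ _ _ _ _⟩ ?_
  rintro r ⟨E, hsub, hsep, rfl⟩
  refine ⟨E, ?_, ?_, rfl⟩
  · intro y hy
    obtain ⟨hyF, hyB⟩ := hsub hy
    refine ⟨hyF, fun j hj => ?_⟩
    have hj1 : (j + 1) * k ≤ n + k - 1 := by
      rw [← Nat.le_div_iff_mul_le hk]
      omega
    have hkj : k * j < n := by
      have h2 : j * k + k ≤ n + k - 1 := by nlinarith
      have h3 : k * j = j * k := mul_comm k j
      omega
    have := hyB (k * j) hkj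
    rwa [Function.iterate_mul] at this
  · intro a ha b hb hab
    obtain ⟨j, hj, hd⟩ := hsep a ha b hb hab
    refine ⟨j / k, ?_, ?_⟩
    · rw [Nat.div_lt_iff_lt_mul hk]
      have h1 := Nat.div_add_mod (n + k - 1) k
      have h2 : (n + k - 1) % k < k := Nat.mod_lt _ hk
      have : n ≤ m * k := by
        have h3 : k * m + (n + k - 1) % k = n + k - 1 := h1
        have h4 : k * m = m * k := mul_comm k m
        omega
      omega
    · by_contra hlt
      push_neg at hlt
      have hmod : j % k < k := Nat.mod_lt _ hk
      have := hδδ' _ _ hlt (j % k) hmod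
      rw [← Function.iterate_mul, ← Function.iterate_add_apply, ← Function.iterate_add_apply,
        Nat.mod_add_div j k] at this
      linarith

lemma key1F [CompactSpace X] [Nonempty X] {T : X → X} {k : ℕ} (hk : 0 < k)
    {δ δ' : ℝ} (hδ' : 0 < δ')
    (hδδ' : ∀ a b : X, dist a b < δ' → ∀ r < k, dist (T^[r] a) (T^[r] b) < δ)
    (n : ℕ) (F : Set X) {ε : ℝ} (hε : 0 < ε) :
    HlocF T n δ F ε ≤ HlocF (T^[k]) ((n + k - 1) / k) δ' F ε := by
  obtain ⟨Q, hQ1, hQ⟩ := sep_bound (T^[k]) hδ'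
  refine Real.iSup_le (fun x => ?_) (HlocF_nonneg (hQ _) hε)
  exact (key1 hk hδ' hδδ' n x.2 hε).trans (Hloc_le_HlocF hQ1 (hQ _) x.2)


/-- Existence of a maximal `(m,e)`-separated set, which then `e`-spans. -/
lemma exists_maximal_sep [CompactSpace X] [Nonempty X] (T : X → X) {e : ℝ} (he : 0 < e)
    (m : ℕ) {Q : ℕ} (hQ : ∀ (E : Finset X), IsSeparated T m e E → E.card ≤ Q ^ m) :
    ∃ S : Finset X, IsSeparated T m e S ∧ S.card ≤ Q ^ m ∧
      ∀ y : X, ∃ s ∈ S, ∀ j < m, dist (T^[j] s) (T^[j] y) < e := by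
  classical
  set P : ℕ → Prop := fun c => ∃ E : Finset X, IsSeparated T m e E ∧ E.card = c with hP
  have hP0 : P 0 := ⟨∅, isSeparated_empty T m e, by simp⟩
  have hPc : P (Nat.findGreatest P (Q ^ m)) :=
    Nat.findGreatest_spec (Nat.zero_le _) hP0
  obtain ⟨E, hEsep, hEcard⟩ := hPc
  refine ⟨E, hEsep, hEcard ▸ Nat.findGreatest_le _, fun y => ?_⟩
  by_contra hcov
  push_neg at hcov
  have hyE : y ∉ E := by
    intro hy
    obtain ⟨j, hj, hd⟩ := hcov y hy
    simp at hd
    linarith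
  have hsep' : IsSeparated T m e (insert y E) := by
    intro a ha b hb hab
    rcases Finset.mem_insert.1 ha with rfl | haE
    · rcases Finset.mem_insert.1 hb with rfl | hbE
      · exact absurd rfl hab
      · obtain ⟨j, hj, hd⟩ := hcov b hbE
        exact ⟨j, hj, by rwa [dist_comm] at hd⟩
    · rcases Finset.mem_insert.1 hb with rfl | hbE
      · obtain ⟨j, hj, hd⟩ := hcov a haE
        exact ⟨j, hj, hd⟩
      · exact hEsep a haE b hbE hab
  have hcard' : (insert y E).card = Nat.findGreatest P (Q ^ m) + 1 := by
    rw [Finset.card_insert_of_notMem hyE, hEcard]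
  have hle : Nat.findGreatest P (Q ^ m) + 1 ≤ Q ^ m := hcard' ▸ hQ _ hsep'
  exact Nat.findGreatest_is_greatest (Nat.lt_succ_self _) hle ⟨insert y E, hsep', hcard'⟩

lemma sep_iterate {T : X → X} {k n : ℕ} (hk : 0 < k) {δ : ℝ} {E : Finset X}
    (h : IsSeparated (T^[k]) n δ E) : IsSeparated T (k * n) δ E := by
  intro a ha b hb hab
  obtain ⟨i, hi, hd⟩ := h a ha b hb hab
  refine ⟨k * i, mul_lt_mul_of_pos_left hi hk, ?_⟩
  rwa [Function.iterate_mul]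

/-- Reverse comparison via covering: `H_{T^k}(n,δ) ≤ kn·log Q₀ + H_T(kn,δ)`. -/
lemma key2 [CompactSpace X] [Nonempty X] (T : X → X) {k : ℕ} (hk : 0 < k)
    {δ ε : ℝ} (hδ : 0 < δ) (hε : 0 < ε) (F : Set X) {Q0 : ℕ} (hQ01 : 1 ≤ Q0)
    (hQ0 : ∀ (n : ℕ) (E : Finset X), IsSeparated T n (ε / 2) E → E.card ≤ Q0 ^ n)
    (n : ℕ) :
    HlocF (T^[k]) n δ F ε ≤ ((k * n : ℕ) : ℝ) * Real.log Q0 + HlocF T (k * n) δ F ε := by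
  classical
  obtain ⟨Q1, hQ11, hQ1⟩ := sep_bound T hδ
  set m := k * n with hmdef
  obtain ⟨S, hSsep, hScard, hScov⟩ := exists_maximal_sep T (half_pos hε) m (fun E => hQ0 m E)
  choose sel hsel1 hsel2 using hScov
  have hHF0 : 0 ≤ HlocF T m δ F ε := HlocF_nonneg (hQ1 m) hε
  have hexp1 : (1:ℝ) ≤ Real.exp (HlocF T m δ F ε) := Real.one_le_exp hHF0
  have hS1 : (1:ℝ) ≤ (S.card : ℝ) := by
    exact_mod_cast Finset.card_pos.2 ⟨sel (Classical.arbitrary X), hsel1 _⟩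
  have hR1 : (1:ℝ) ≤ (S.card : ℝ) * Real.exp (HlocF T m δ F ε) := by nlinarith
  have hlogS : Real.log (S.card : ℝ) ≤ (m : ℝ) * Real.log Q0 := by
    have h1 : ((S.card : ℝ)) ≤ ((Q0 : ℝ)) ^ m := by exact_mod_cast hScard
    have h2 : (1:ℝ) ≤ ((Q0:ℝ)) ^ m := one_le_pow₀ (by exact_mod_cast hQ01)
    have := log_le_log' (by positivity) h1 h2
    rwa [Real.log_pow] at this
  have hmain : ∀ x : F, Hloc (T^[k]) n δ (x : X) F ε ≤
      (m : ℝ) * Real.log Q0 + HlocF T m δ F ε := by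
    intro x
    have hsup_le : sSup (MSet (T^[k]) n δ (x : X) F ε) ≤
        (S.card : ℝ) * Real.exp (HlocF T m δ F ε) := by
      refine Real.sSup_le ?_ (by positivity)
      rintro r ⟨E, hsub, hsep, rfl⟩
      have hsepT : IsSeparated T m δ E := sep_iterate hk hsep
      have hfib : E.card = ∑ s ∈ S, (E.filter fun y => sel y = s).card :=
        Finset.card_eq_sum_card_fiberwise (fun y _ => hsel1 y)
      have hbound : ∀ s ∈ S,
          (((E.filter fun y => sel y = s).card : ℕ) : ℝ) ≤ Real.exp (HlocF T m δ F ε) := by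
        intro s hs
        set Es := E.filter fun y => sel y = s with hEsdef
        rcases Es.eq_empty_or_nonempty with hemp | ⟨e, heEs⟩
        · rw [hemp]
          simp only [Finset.card_empty, Nat.cast_zero]
          positivity
        · have heE : e ∈ E := Finset.mem_of_mem_filter _ heEs
          have hesel : sel e = s := (Finset.mem_filter.1 heEs).2
          have heF : e ∈ F := (hsub heE).1
          have hmem : ((Es.card : ℕ) : ℝ) ∈ MSet T m δ e F ε := by
            refine ⟨Es, ?_, isSeparated_subset hsepT (Finset.filter_subset _ _), rfl⟩
            intro y hy
            have hyEs : y ∈ Es := hy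
            have hyE : y ∈ E := Finset.mem_of_mem_filter _ hyEs
            have hysel : sel y = s := (Finset.mem_filter.1 hyEs).2
            refine ⟨(hsub hyE).1, fun j hj => ?_⟩
            have d1 : dist (T^[j] s) (T^[j] e) < ε / 2 := by
              have := hsel2 e j hj; rwa [hesel] at this
            have d2 : dist (T^[j] s) (T^[j] y) < ε / 2 := by
              have := hsel2 y j hj; rwa [hysel] at this
            calc dist (T^[j] e) (T^[j] y)
                ≤ dist (T^[j] e) (T^[j] s) + dist (T^[j] s) (T^[j] y) := dist_triangle _ _ _
              _ < ε := by rw [dist_comm]; linarith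
          have hle1 : ((Es.card : ℕ) : ℝ) ≤ sSup (MSet T m δ e F ε) :=
            le_csSup (MSet_bddAbove (hQ1 m)) hmem
          have hpos : (1:ℝ) ≤ sSup (MSet T m δ e F ε) := one_le_sSup_MSet (hQ1 m) heF hε
          have hexp : sSup (MSet T m δ e F ε) = Real.exp (Hloc T m δ e F ε) := by
            rw [Hloc_eq, Real.exp_log (by linarith)]
          calc ((Es.card : ℕ) : ℝ) ≤ sSup (MSet T m δ e F ε) := hle1
            _ = Real.exp (Hloc T m δ e F ε) := hexp
            _ ≤ Real.exp (HlocF T m δ F ε) :=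
              Real.exp_le_exp.2 (Hloc_le_HlocF hQ11 (hQ1 m) heF)
      calc ((E.card : ℕ) : ℝ)
          = ∑ s ∈ S, (((E.filter fun y => sel y = s).card : ℕ) : ℝ) := by
            rw [hfib]; push_cast; ring
        _ ≤ S.card • Real.exp (HlocF T m δ F ε) := Finset.sum_le_card_nsmul _ _ _ hbound
        _ = (S.card : ℝ) * Real.exp (HlocF T m δ F ε) := nsmul_eq_mul _ _
    rw [Hloc_eq]
    calc Real.log (sSup (MSet (T^[k]) n δ (x : X) F ε))
        ≤ Real.log ((S.card : ℝ) * Real.exp (HlocF T m δ F ε)) :=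
          log_le_log' (sSup_MSet_nonneg _ _ _ _ _ _) hsup_le hR1
      _ = Real.log (S.card : ℝ) + HlocF T m δ F ε := by
          rw [Real.log_mul (by positivity) (Real.exp_ne_zero _), Real.log_exp]
      _ ≤ (m : ℝ) * Real.log Q0 + HlocF T m δ F ε := by linarith
  refine Real.iSup_le (fun x => hmain x) ?_
  have : (0:ℝ) ≤ Real.log Q0 := Real.log_nonneg (by exact_mod_cast hQ01)
  positivity


lemma bdd_div {w : ℕ → ℝ} {Cw : ℝ} (hw0 : ∀ n, 0 ≤ w n) (hwC : ∀ n, w n ≤ n * Cw) :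
    ∀ n : ℕ, w n / n ≤ Cw := by
  intro n
  rcases Nat.eq_zero_or_pos n with rfl | hn
  · simp only [Nat.cast_zero, div_zero]
    exact le_trans (hw0 1) (by simpa using hwC 1)
  · have hn' : (0:ℝ) < n := by exact_mod_cast hn
    rw [div_le_iff₀ hn']
    calc w n ≤ n * Cw := hwC n
      _ = Cw * n := mul_comm _ _

lemma div_nonneg' {w : ℕ → ℝ} (hw0 : ∀ n, 0 ≤ w n) : ∀ n : ℕ, 0 ≤ w n / n :=
  fun n => div_nonneg (hw0 n) (Nat.cast_nonneg n)

/-- First limsup comparison: `limsup uₙ/n ≤ (limsup vₙ/n)/k` when `uₙ ≤ v⌈n/k⌉`. -/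
lemma limsup_key1 {k : ℕ} (hk : 0 < k) {u v : ℕ → ℝ} {Cu Cv : ℝ}
    (hu0 : ∀ n, 0 ≤ u n) (hv0 : ∀ n, 0 ≤ v n)
    (huC : ∀ n, u n ≤ n * Cu) (hvC : ∀ n, v n ≤ n * Cv)
    (huv : ∀ n, u n ≤ v ((n + k - 1) / k)) :
    limsup (fun n : ℕ => u n / n) atTop ≤ limsup (fun n : ℕ => v n / n) atTop / k := by
  have hk' : (0:ℝ) < k := by exact_mod_cast hk
  set f := fun n : ℕ => u n / n with hf
  set g := fun n : ℕ => v n / n with hg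
  have hfC := bdd_div hu0 huC
  have hgC := bdd_div hv0 hvC
  have hf0 := div_nonneg' hu0
  have hg0 := div_nonneg' hv0
  have hbdd_f : IsBoundedUnder (· ≤ ·) atTop f := Filter.isBoundedUnder_of ⟨Cu, hfC⟩
  have hbdd_g : IsBoundedUnder (· ≤ ·) atTop g := Filter.isBoundedUnder_of ⟨Cv, hgC⟩
  have hcobdd_f : IsCoboundedUnder (· ≤ ·) atTop f :=
    (Filter.isBoundedUnder_of ⟨(0:ℝ), fun n => hf0 n⟩ :
      IsBoundedUnder (· ≥ ·) atTop f).isCobounded_le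
  set L := limsup g atTop with hL
  have hL0 : 0 ≤ L := le_limsup_of_frequently_le (Frequently.of_forall hg0) hbdd_g
  refine le_of_forall_pos_le_add fun η hη => ?_
  have hev : ∀ᶠ m in atTop, g m < L + k * η / 2 :=
    eventually_lt_of_limsup_lt (by rw [← hL]; exact lt_add_of_pos_right _ (by positivity)) hbdd_g
  obtain ⟨M, hM⟩ := eventually_atTop.1 hev
  obtain ⟨N1, hN1⟩ := exists_nat_ge (2 * (L + k * η / 2) / η)
  refine limsup_le_of_le hcobdd_f ?_
  filter_upwards [eventually_ge_atTop (k * (M + 1)), eventually_ge_atTop N1,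
    eventually_ge_atTop 1] with n hn1 hn2 hn3
  set m := (n + k - 1) / k with hm
  have hmM : M + 1 ≤ m := by
    have h1 : k * (M + 1) ≤ n + k - 1 := by omega
    have h2 : k * (M + 1) / k ≤ (n + k - 1) / k := Nat.div_le_div_right h1
    rw [Nat.mul_div_cancel_left _ hk] at h2
    rw [hm]
    exact h2
  have hm1 : 1 ≤ m := by omega
  have hmk : m * k + 1 ≤ n + k := by
    have h5 : m * k ≤ n + k - 1 := by
      rw [hm]; exact Nat.div_mul_le_self _ _
    omega
  have hnR : (1:ℝ) ≤ (n:ℝ) := by exact_mod_cast hn3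
  have hmR : (1:ℝ) ≤ (m:ℝ) := by exact_mod_cast hm1
  have hn0 : (0:ℝ) < (n:ℝ) := by linarith
  have hm0 : (0:ℝ) < (m:ℝ) := by linarith
  have hgm : v m / m < L + k * η / 2 := hM m (by omega)
  have hfn : u n / n ≤ v m / n := (div_le_div_iff_of_pos_right hn0).2 (huv n)
  have heq : v m / n = (v m / m) * (m / n) := by field_simp
  have hmle : (m:ℝ) ≤ (n:ℝ) / k + 1 := by
    have hcast : (m:ℝ) * k + 1 ≤ (n:ℝ) + k := by exact_mod_cast hmk
    have h2 : ((m:ℝ) - 1) * k ≤ n := by nlinarith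
    have h3 : (m:ℝ) - 1 ≤ (n:ℝ) / k := (le_div_iff₀ hk').2 h2
    linarith
  have hstep : (v m / m) * ((m:ℝ) / n) ≤ (L + k * η / 2) * ((m:ℝ) / n) :=
    mul_le_mul_of_nonneg_right hgm.le (by positivity)
  have hstep2 : (L + k * η / 2) * ((m:ℝ) / n) ≤ (L + k * η / 2) * (1 / k + 1 / n) := by
    refine mul_le_mul_of_nonneg_left ?_ (by nlinarith)
    rw [div_le_iff₀ hn0]
    have : (1 / (k:ℝ) + 1 / n) * n = n / k + 1 := by field_simp
    rw [this]
    exact hmle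
  have hexpand : (L + k * η / 2) * (1 / (k:ℝ) + 1 / n) =
      (L / k + η / 2) + (L + k * η / 2) / n := by
    field_simp
  have htail : (L + k * η / 2) / n ≤ η / 2 := by
    rw [div_le_iff₀ hn0]
    have h4 : 2 * (L + k * η / 2) / η ≤ (n:ℝ) := le_trans hN1 (by exact_mod_cast hn2)
    rw [div_le_iff₀ hη] at h4
    linarith
  calc f n = u n / n := rfl
    _ ≤ v m / n := hfn
    _ = (v m / m) * ((m:ℝ) / n) := heq
    _ ≤ (L + k * η / 2) * ((m:ℝ) / n) := hstep
    _ ≤ (L + k * η / 2) * (1 / k + 1 / n) := hstep2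
    _ = (L / k + η / 2) + (L + k * η / 2) / n := hexpand
    _ ≤ L / k + η := by linarith

/-- Second limsup comparison: `limsup vₙ/n ≤ kC + k·limsup uₙ/n` when `vₙ ≤ knC + u(kn)`. -/
lemma limsup_key2 {k : ℕ} (hk : 0 < k) {u v : ℕ → ℝ} {Cu C : ℝ} (hC : 0 ≤ C)
    (hu0 : ∀ n, 0 ≤ u n) (hv0 : ∀ n, 0 ≤ v n)
    (huC : ∀ n, u n ≤ n * Cu)
    (huv : ∀ n, v n ≤ ((k * n : ℕ) : ℝ) * C + u (k * n)) :
    limsup (fun n : ℕ => v n / n) atTop ≤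
      (k:ℝ) * C + (k:ℝ) * limsup (fun n : ℕ => u n / n) atTop := by
  have hk' : (0:ℝ) < k := by exact_mod_cast hk
  set f := fun n : ℕ => u n / n with hf
  set g := fun n : ℕ => v n / n with hg
  have hCu0 : 0 ≤ Cu := le_trans (hu0 1) (by simpa using huC 1)
  have hfC := bdd_div hu0 huC
  have hf0 := div_nonneg' hu0
  have hg0 := div_nonneg' hv0
  have hvC : ∀ n : ℕ, v n ≤ n * (k * C + k * Cu) := by
    intro n
    calc v n ≤ ((k * n : ℕ) : ℝ) * C + u (k * n) := huv n
      _ ≤ ((k * n : ℕ) : ℝ) * C + ((k * n : ℕ) : ℝ) * Cu :=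
          add_le_add_right (huC (k * n)) _
      _ = n * (k * C + k * Cu) := by push_cast; ring
  have hgC := bdd_div hv0 hvC
  have hbdd_f : IsBoundedUnder (· ≤ ·) atTop f := Filter.isBoundedUnder_of ⟨Cu, hfC⟩
  have hbdd_g : IsBoundedUnder (· ≤ ·) atTop g :=
    Filter.isBoundedUnder_of ⟨k * C + k * Cu, hgC⟩
  have hcobdd_g : IsCoboundedUnder (· ≤ ·) atTop g :=
    (Filter.isBoundedUnder_of ⟨(0:ℝ), fun n => hg0 n⟩ :
      IsBoundedUnder (· ≥ ·) atTop g).isCobounded_le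
  set L := limsup f atTop with hL
  refine le_of_forall_pos_le_add fun η hη => ?_
  have hev : ∀ᶠ m in atTop, f m < L + η / k :=
    eventually_lt_of_limsup_lt (by rw [← hL]; exact lt_add_of_pos_right _ (by positivity)) hbdd_f
  obtain ⟨M, hM⟩ := eventually_atTop.1 hev
  refine limsup_le_of_le hcobdd_g ?_
  filter_upwards [eventually_ge_atTop (M + 1)] with n hn
  have hn1 : 1 ≤ n := by omega
  have hnR : (1:ℝ) ≤ (n:ℝ) := by exact_mod_cast hn1
  have hn0 : (0:ℝ) < (n:ℝ) := by linarith
  have hknM : M ≤ k * n := by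
    have := Nat.le_mul_of_pos_left n hk
    omega
  have hfkn : u (k * n) / ((k * n : ℕ) : ℝ) < L + η / k := hM (k * n) hknM
  have hkn0 : (0:ℝ) < ((k * n : ℕ) : ℝ) := by exact_mod_cast Nat.mul_pos hk hn1
  have h1 : v n / n ≤ (((k * n : ℕ) : ℝ) * C + u (k * n)) / n :=
    (div_le_div_iff_of_pos_right hn0).2 (huv n)
  have h2 : (((k * n : ℕ) : ℝ) * C + u (k * n)) / n =
      (k:ℝ) * C + (k:ℝ) * (u (k * n) / ((k * n : ℕ) : ℝ)) := by
    push_cast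
    field_simp
  have h3 : (k:ℝ) * (u (k * n) / ((k * n : ℕ) : ℝ)) ≤ (k:ℝ) * (L + η / k) :=
    mul_le_mul_of_nonneg_left hfkn.le hk'.le
  have h4 : (k:ℝ) * (L + η / k) = k * L + η := by field_simp
  calc g n = v n / n := rfl
    _ ≤ (((k * n : ℕ) : ℝ) * C + u (k * n)) / n := h1
    _ = (k:ℝ) * C + (k:ℝ) * (u (k * n) / ((k * n : ℕ) : ℝ)) := h2
    _ ≤ (k:ℝ) * C + ((k:ℝ) * L + η) := by linarith
    _ = (k:ℝ) * C + (k:ℝ) * L + η := by ring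


lemma hδF_nonneg [CompactSpace X] [Nonempty X] (T : X → X) {δ : ℝ} (hδ : 0 < δ)
    (F : Set X) {ε : ℝ} (hε : 0 < ε) : 0 ≤ hδF T δ F ε := by
  obtain ⟨Q, hQ1, hQ⟩ := sep_bound T hδ
  have hu0 : ∀ n : ℕ, 0 ≤ HlocF T n δ F ε / n :=
    div_nonneg' fun n => HlocF_nonneg (hQ n) hε
  have hbdd : IsBoundedUnder (· ≤ ·) atTop (fun n : ℕ => HlocF T n δ F ε / n) :=
    Filter.isBoundedUnder_of ⟨Real.log Q,
      bdd_div (fun n => HlocF_nonneg (hQ n) hε) (fun n => HlocF_le hQ1 (hQ n))⟩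
  exact le_limsup_of_frequently_le (Frequently.of_forall hu0) hbdd

lemma hXF_nonneg [CompactSpace X] [Nonempty X] (T : X → X) (F : Set X) {ε : ℝ}
    (hε : 0 < ε) : 0 ≤ hXF T F ε :=
  Real.iSup_nonneg fun δ => hδF_nonneg T δ.2 F hε

lemma hδF_key1 [CompactSpace X] [Nonempty X] {T : X → X} (hT : Continuous T) {k : ℕ}
    (hk : 0 < k) {δ : ℝ} (hδ : 0 < δ) (F : Set X) {ε : ℝ} (hε : 0 < ε) :
    ∃ δ' : ℝ, 0 < δ' ∧ hδF T δ F ε ≤ hδF (T^[k]) δ' F ε / k := by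
  obtain ⟨δ', hδ'pos, hprop⟩ := unif_iterates hT k hδ
  obtain ⟨Q1, hQ11, hQ1⟩ := sep_bound T hδ
  obtain ⟨Q2, hQ21, hQ2⟩ := sep_bound (T^[k]) hδ'pos
  refine ⟨δ', hδ'pos, ?_⟩
  exact limsup_key1 hk (fun n => HlocF_nonneg (hQ1 n) hε)
    (fun n => HlocF_nonneg (hQ2 n) hε)
    (fun n => HlocF_le hQ11 (hQ1 n)) (fun n => HlocF_le hQ21 (hQ2 n))
    (fun n => key1F hk hδ'pos hprop n F hε)

lemma hδF_key2 [CompactSpace X] [Nonempty X] (T : X → X) {k : ℕ} (hk : 0 < k)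
    {ε : ℝ} (hε : 0 < ε) (F : Set X) :
    ∃ C : ℝ, 0 ≤ C ∧ ∀ δ : ℝ, 0 < δ →
      hδF (T^[k]) δ F ε ≤ (k : ℝ) * C + (k : ℝ) * hδF T δ F ε := by
  obtain ⟨Q0, hQ01, hQ0⟩ := sep_bound T (half_pos hε)
  refine ⟨Real.log Q0, Real.log_nonneg (by exact_mod_cast hQ01), fun δ hδ => ?_⟩
  obtain ⟨Q1, hQ11, hQ1⟩ := sep_bound T hδ
  obtain ⟨Q2, hQ21, hQ2⟩ := sep_bound (T^[k]) hδ
  exact limsup_key2 hk (Real.log_nonneg (by exact_mod_cast hQ01))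
    (fun n => HlocF_nonneg (hQ1 n) hε) (fun n => HlocF_nonneg (hQ2 n) hε)
    (fun n => HlocF_le hQ11 (hQ1 n))
    (fun n => key2 T hk hδ hε F hQ01 hQ0 n)

lemma hXF_le [CompactSpace X] [Nonempty X] {T : X → X} (hT : Continuous T) {k : ℕ}
    (hk : 0 < k) (F : Set X) {ε : ℝ} (hε : 0 < ε) :
    hXF T F ε ≤ hXF (T^[k]) F ε / k := by
  have hk' : (0:ℝ) < k := by exact_mod_cast hk
  set A : {δ : ℝ // 0 < δ} → ℝ := fun δ => hδF T δ F ε with hA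
  set B : {δ : ℝ // 0 < δ} → ℝ := fun δ => hδF (T^[k]) δ F ε with hB
  have hhXF : hXF T F ε = ⨆ δ, A δ := rfl
  have hhXFk : hXF (T^[k]) F ε = ⨆ δ, B δ := rfl
  have hAB : ∀ δ : {δ : ℝ // 0 < δ}, ∃ δ2 : {δ : ℝ // 0 < δ}, A δ ≤ B δ2 / k := by
    intro δ
    obtain ⟨δ', h1, h2⟩ := hδF_key1 hT hk δ.2 F hε
    exact ⟨⟨δ', h1⟩, h2⟩
  obtain ⟨C, hC0, hBA⟩ := hδF_key2 T hk hε F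
  have hB0 : ∀ δ, 0 ≤ B δ := fun δ => hδF_nonneg _ δ.2 F hε
  by_cases hbdd : BddAbove (Set.range B)
  · rw [hhXF, hhXFk]
    refine Real.iSup_le (fun δ => ?_) (div_nonneg (Real.iSup_nonneg hB0) hk'.le)
    obtain ⟨δ2, hδ2⟩ := hAB δ
    exact hδ2.trans ((div_le_div_iff_of_pos_right hk').2 (le_ciSup hbdd δ2))
  · have hbddA : ¬ BddAbove (Set.range A) := by
      rintro ⟨bA, hbA⟩
      apply hbdd
      refine ⟨(k:ℝ) * C + (k:ℝ) * bA, ?_⟩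
      rintro y ⟨δ, rfl⟩
      have h1 := hBA δ δ.2
      have h2 : A δ ≤ bA := hbA ⟨δ, rfl⟩
      calc B δ ≤ (k:ℝ) * C + (k:ℝ) * A δ := h1
        _ ≤ (k:ℝ) * C + (k:ℝ) * bA := by nlinarith
    rw [hhXF, hhXFk, Real.iSup_of_not_bddAbove hbddA, Real.iSup_of_not_bddAbove hbdd,
      zero_div]

end NHAux

theorem hNew_le_hNew_iterate_div [CompactSpace X] [MeasurableSpace X] [BorelSpace X]
    (T : X → X) (hT : Continuous T) (ν : Measure X) [IsProbabilityMeasure ν]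
    (hν : Ergodic T ν) (k : ℕ) (hk : 0 < k) (ε : ℝ) (hε : 0 < ε) :
    hNew T ν ε ≤ hNew (T^[k]) ν ε / k := by
  have hXne : Nonempty X := by
    rcases isEmpty_or_nonempty X with h | h
    · exfalso
      have h1 : ν Set.univ = 1 := measure_univ
      rw [Set.univ_eq_empty_iff.2 h, measure_empty] at h1
      exact zero_ne_one h1
    · exact h
  have hk' : (0:ℝ) < k := by exact_mod_cast hk
  have huniv : ∀ σ : {σ : ℝ // σ < 1}, (σ : ℝ) < (ν Set.univ).toReal := by
    intro σ
    rw [measure_univ, ENNReal.toReal_one]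
    exact σ.2
  simp only [hNew]
  set SK : {σ : ℝ // σ < 1} → Set ℝ := fun σ =>
    {h : ℝ | ∃ F : Set X, MeasurableSet F ∧ (σ : ℝ) < (ν F).toReal ∧ h = hXF (T^[k]) F ε}
    with hSK
  set ST : {σ : ℝ // σ < 1} → Set ℝ := fun σ =>
    {h : ℝ | ∃ F : Set X, MeasurableSet F ∧ (σ : ℝ) < (ν F).toReal ∧ h = hXF T F ε}
    with hST
  have hSKne : ∀ σ, (SK σ).Nonempty :=
    fun σ => ⟨_, Set.univ, MeasurableSet.univ, huniv σ, rfl⟩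
  have hSTbdd : ∀ σ, BddBelow (ST σ) := by
    intro σ
    refine ⟨0, ?_⟩
    rintro y ⟨F, -, -, rfl⟩
    exact NHAux.hXF_nonneg T F hε
  have hSKbdd : ∀ σ, BddBelow (SK σ) := by
    intro σ
    refine ⟨0, ?_⟩
    rintro y ⟨F, -, -, rfl⟩
    exact NHAux.hXF_nonneg (T^[k]) F hε
  have hJle : ∀ σ, sInf (SK σ) ≤ hXF (T^[k]) Set.univ ε :=
    fun σ => csInf_le (hSKbdd σ) ⟨Set.univ, MeasurableSet.univ, huniv σ, rfl⟩
  have hbddJ : BddAbove (Set.range fun σ => sInf (SK σ)) := by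
    refine ⟨hXF (T^[k]) Set.univ ε, ?_⟩
    rintro y ⟨σ, rfl⟩
    exact hJle σ
  have hJ0 : ∀ σ, 0 ≤ sInf (SK σ) := by
    intro σ
    refine Real.sInf_nonneg ?_
    rintro y ⟨F, -, -, rfl⟩
    exact NHAux.hXF_nonneg (T^[k]) F hε
  refine Real.iSup_le (fun σ => ?_)
    (div_nonneg (Real.iSup_nonneg hJ0) hk'.le)
  have h1 : sInf (ST σ) ≤ sInf (SK σ) / k := by
    rw [le_div_iff₀ hk']
    refine le_csInf (hSKne σ) ?_
    rintro b ⟨F, hFm, hFν, rfl⟩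
    have h2 : sInf (ST σ) ≤ hXF T F ε := csInf_le (hSTbdd σ) ⟨F, hFm, hFν, rfl⟩
    have h3 : hXF T F ε ≤ hXF (T^[k]) F ε / k := NHAux.hXF_le hT hk F hε
    exact (le_div_iff₀ hk').1 (h2.trans h3)
  exact h1.trans ((div_le_div_iff_of_pos_right hk').2 (le_ciSup hbddJ σ))
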